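/- For all nonnegative integers n and k such that n - k is odd, the Bernoulli–Stirling number of the first kind vanishes: A_{n,k} = 0. -/

import Mathlib

/-- Unsigned Stirling numbers of the first kind (cycle Stirling numbers). -/
def stirling1 : ℕ → ℕ → ℕ
  | 0, 0 => 1
  | 0, _ + 1 => 0
  | _ + 1, 0 => 0
  | n + 1, k + 1 => n * stirling1 n (k + 1) + stirling1 n k

/-- Generalized binomial coefficient with integer top: `C(a,b) = a(a-1)⋯(a-b+1)/b!`. -/
def intChoose (a : ℤ) (b : ℕ) : ℚ :=
  (∏ i ∈ Finset.range b, ((a : ℚ) - i)) / b.factorial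

/-- Bernoulli–Stirling numbers of the first kind. -/
def bsA (n k : ℕ) : ℚ :=
  ∑ h ∈ Finset.range (n + 1),
    bernoulli h * intChoose ((k : ℤ) + h - 1) h * stirling1 n (h + k) * (n : ℚ) ^ h

open Polynomial Finset

lemma stirling1_eq_zero_of_lt : ∀ n m : ℕ, n < m → stirling1 n m = 0
  | 0, _+1, _ => rfl
  | n+1, m+1, h => by
    simp [stirling1, stirling1_eq_zero_of_lt n (m+1) (by omega),
      stirling1_eq_zero_of_lt n m (by omega)]

noncomputable def fpoly (n : ℕ) : Polynomial ℚ :=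
  ∏ j ∈ Finset.range n, (Polynomial.X + Polynomial.C (j : ℚ))

lemma coeff_fpoly : ∀ n m : ℕ, (fpoly n).coeff m = stirling1 n m
  | 0, 0 => by simp [fpoly, stirling1]
  | 0, m+1 => by simp [fpoly, stirling1, coeff_one]
  | n+1, m => by
    have e : fpoly (n+1) = fpoly n * X + C (n:ℚ) * fpoly n := by
      rw [fpoly, prod_range_succ, ← fpoly]; ring
    rw [e]
    cases m with
    | zero =>
      rw [coeff_add, coeff_mul_X_zero, coeff_C_mul, coeff_fpoly n 0]
      cases n with
      | zero => simp [stirling1]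
      | succ n => simp [stirling1]
    | succ m =>
      rw [coeff_add, coeff_mul_X, coeff_C_mul, coeff_fpoly n m, coeff_fpoly n (m+1)]
      show (stirling1 n m : ℚ) + n * stirling1 n (m+1) = (stirling1 (n+1) (m+1) : ℚ)
      rw [show stirling1 (n+1) (m+1) = n * stirling1 n (m + 1) + stirling1 n m from rfl]
      push_cast; ring

noncomputable def gpoly (n : ℕ) : Polynomial ℚ :=
  ∏ j ∈ Finset.range n, (Polynomial.X + Polynomial.C ((j : ℚ) + 1))

lemma fpoly_succ (n : ℕ) : fpoly (n+1) = gpoly n * X := by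
  rw [fpoly, Finset.prod_range_succ']
  simp only [Nat.cast_add, Nat.cast_one, Nat.cast_zero, map_zero, add_zero]
  rfl

lemma coeff_gpoly (n m : ℕ) : (gpoly n).coeff m = stirling1 (n+1) (m+1) := by
  have := coeff_fpoly (n+1) (m+1)
  rw [fpoly_succ, coeff_mul_X] at this
  exact this

lemma gpoly_comp (n : ℕ) :
    (gpoly n).comp (-X - C ((n:ℚ)+1)) = (-1)^n * gpoly n := by
  rw [gpoly, Polynomial.prod_comp]
  have key : ∀ j ∈ Finset.range n,
      (X + C ((j:ℚ)+1)).comp (-X - C ((n:ℚ)+1))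
        = (-1) * (X + C (((n-1-j : ℕ):ℚ) + 1)) := by
    intro j hj
    have hj' : j < n := Finset.mem_range.mp hj
    have h2 : j ≤ n - 1 := by omega
    have h1 : (1:ℕ) ≤ n := by omega
    rw [Nat.cast_sub h2, Nat.cast_sub h1]
    simp only [add_comp, X_comp, C_comp, Nat.cast_one, map_add, map_sub, map_one, one_comp]
    ring
  rw [Finset.prod_congr rfl key, Finset.prod_mul_distrib, Finset.prod_const,
    Finset.prod_range_reflect (fun j => X + C ((j:ℚ)+1)) n, Finset.card_range]


lemma iterderiv_comp (c : ℚ) (p : Polynomial ℚ) :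
    ∀ m : ℕ, derivative^[m] (p.comp (-X - C c))
      = (-1)^m * ((derivative^[m] p).comp (-X - C c))
  | 0 => by simp
  | m+1 => by
    rw [Function.iterate_succ_apply', iterderiv_comp c p m, derivative_mul,
      derivative_comp]
    rw [Function.iterate_succ_apply']
    simp only [derivative_sub, derivative_neg, derivative_X, derivative_C, sub_zero]
    have : derivative ((-1 : Polynomial ℚ)^m) = 0 := by
      rw [show ((-1 : Polynomial ℚ)^m) = C ((-1:ℚ)^m) by rw [map_pow, map_neg, map_one]]
      exact derivative_C
    rw [this]
    ring

lemma bern_sum (j : ℕ) :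
    ∑ h ∈ Finset.range (j+1), (j.choose h : ℚ) * _root_.bernoulli h = (-1)^j * _root_.bernoulli j := by
  rw [Finset.sum_range_succ, _root_.sum_bernoulli, Nat.choose_self, Nat.cast_one, one_mul]
  by_cases h1 : j = 1
  · subst h1; norm_num [_root_.bernoulli_one]
  · rw [if_neg h1, zero_add]
    rcases Nat.even_or_odd j with he | ho
    · rw [he.neg_one_pow, one_mul]
    · rcases Nat.lt_or_ge j 2 with h2 | h2
      · interval_cases j <;> simp_all
      · rw [bernoulli_eq_bernoulli'_of_ne_one h1, bernoulli'_eq_zero_of_odd ho (by omega)]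
        ring

noncomputable def Lb (n : ℕ) (p : Polynomial ℚ) : ℚ :=
  p.sum fun h c => _root_.bernoulli h * c * (n:ℚ)^h

lemma Lb_zero (n : ℕ) : Lb n 0 = 0 := Polynomial.sum_zero_index _

lemma Lb_add (n : ℕ) (p q : Polynomial ℚ) : Lb n (p + q) = Lb n p + Lb n q :=
  Polynomial.sum_add_index p q _ (fun i => by ring) (fun a b c => by ring)

lemma Lb_smul (n : ℕ) (c : ℚ) (p : Polynomial ℚ) : Lb n (c • p) = c * Lb n p := by
  rw [Lb, Polynomial.sum_smul_index p c _ (fun i => by ring), Lb,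
    Polynomial.sum_def, Polynomial.sum_def, Finset.mul_sum]
  exact Finset.sum_congr rfl fun i _ => by ring

lemma Lb_eq_range (n N : ℕ) (p : Polynomial ℚ) (h : p.natDegree < N) :
    Lb n p = ∑ i ∈ Finset.range N, _root_.bernoulli i * p.coeff i * (n:ℚ)^i :=
  Polynomial.sum_over_range' p (fun i => by ring) N h

lemma Lb_pow (n j : ℕ) : Lb n ((-X - C (n:ℚ))^j) = _root_.bernoulli j * (n:ℚ)^j := by
  have e : (-X - C (n:ℚ))^j = ((-1:ℚ)^j) • (X + C (n:ℚ))^j := by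
    rw [smul_eq_C_mul, map_pow, map_neg, map_one, ← mul_pow]
    ring_nf
  have hdeg : ((X + C (n:ℚ))^j).natDegree < j + 1 := by
    have := Polynomial.natDegree_pow_le (p := X + C (n:ℚ)) (n := j)
    have h2 : (X + C (n:ℚ)).natDegree ≤ 1 := le_of_eq (Polynomial.natDegree_X_add_C _)
    calc ((X + C (n:ℚ))^j).natDegree ≤ j * (X + C (n:ℚ)).natDegree := this
    _ ≤ j * 1 := Nat.mul_le_mul_left _ h2
    _ < j + 1 := by omega
  rw [e, Lb_smul, Lb_eq_range n (j+1) _ hdeg]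
  have : ∀ i ∈ Finset.range (j+1),
      _root_.bernoulli i * ((X + C (n:ℚ))^j).coeff i * (n:ℚ)^i
        = (j.choose i : ℚ) * _root_.bernoulli i * (n:ℚ)^j := by
    intro i hi
    have hij : i ≤ j := by have := Finset.mem_range.mp hi; omega
    rw [coeff_X_add_C_pow]
    have hnn : (n:ℚ)^(j-i) * (n:ℚ)^i = (n:ℚ)^j := by
      rw [← pow_add, Nat.sub_add_cancel hij]
    calc _root_.bernoulli i * ((n:ℚ)^(j-i) * (j.choose i:ℚ)) * (n:ℚ)^i
        = (j.choose i:ℚ) * _root_.bernoulli i * ((n:ℚ)^(j-i) * (n:ℚ)^i) := by ring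
      _ = _ := by rw [hnn]
  rw [Finset.sum_congr rfl this, show ∑ i ∈ Finset.range (j+1),
      (j.choose i : ℚ) * _root_.bernoulli i * (n:ℚ)^j
    = (∑ i ∈ Finset.range (j+1), (j.choose i : ℚ) * _root_.bernoulli i) * (n:ℚ)^j from
    (Finset.sum_mul _ _ _).symm, bern_sum]
  rw [← mul_assoc, ← mul_assoc, ← mul_pow]
  norm_num

lemma Lb_monomial (n j : ℕ) (c : ℚ) : Lb n (monomial j c) = _root_.bernoulli j * c * (n:ℚ)^j :=
  Polynomial.sum_monomial_index c _ (by ring)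

lemma Lb_comp (n : ℕ) (p : Polynomial ℚ) :
    Lb n (p.comp (-X - C (n:ℚ))) = Lb n p := by
  induction p using Polynomial.induction_on' with
  | add p q hp hq => rw [add_comp, Lb_add, hp, hq, Lb_add]
  | monomial j c =>
    rw [monomial_comp, ← smul_eq_C_mul, Lb_smul, Lb_pow, Lb_monomial]
    ring

lemma prod_cast_descFactorial (m b : ℕ) :
    ∏ i ∈ Finset.range b, ((m:ℚ) - i) = (m.descFactorial b : ℚ) := by
  induction b with
  | zero => simp
  | succ b ih =>
    rw [Finset.prod_range_succ, ih, Nat.descFactorial_succ]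
    rcases Nat.lt_or_ge m b with hlt | hle
    · simp [Nat.descFactorial_eq_zero_iff_lt.mpr hlt]
    · rw [Nat.cast_mul, Nat.cast_sub hle]
      ring

lemma intChoose_natCast (m b : ℕ) : intChoose (m:ℤ) b = (m.choose b : ℚ) := by
  unfold intChoose
  rw [show (∏ i ∈ Finset.range b, (((m:ℤ):ℚ) - i)) = ∏ i ∈ Finset.range b, ((m:ℚ) - i) by
    push_cast; rfl]
  rw [prod_cast_descFactorial, Nat.descFactorial_eq_factorial_mul_choose]
  have hb : (b.factorial : ℚ) ≠ 0 := Nat.cast_ne_zero.mpr b.factorial_ne_zero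
  push_cast
  field_simp

theorem bsA_eq_zero_of_odd (n k : ℕ) (h : Odd ((n : ℤ) - k)) : bsA n k = 0 := by
  cases n with
  | zero =>
    have hk : k ≠ 0 := by rintro rfl; simp at h
    unfold bsA
    apply Finset.sum_eq_zero
    intro x hx
    rw [stirling1_eq_zero_of_lt 0 (x + k) (by omega)]
    simp
  | succ N =>
    cases k with
    | zero =>
      unfold bsA
      apply Finset.sum_eq_zero
      intro x hx
      cases x with
      | zero => rw [show stirling1 (N+1) (0+0) = 0 from rfl]; simp
      | succ x =>
        have hz : intChoose (((0:ℕ):ℤ) + ((x+1:ℕ):ℤ) - 1) (x+1) = 0 := by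
          unfold intChoose
          rw [Finset.prod_eq_zero (Finset.self_mem_range_succ x) (by push_cast; ring)]
          simp
        rw [hz]
        ring
    | succ K =>
      have hodd : Odd (N + K) := by
        have h' : Odd ((N:ℤ) - K) := by
          have e : ((N:ℤ) - K) = (((N+1:ℕ):ℤ) - ((K+1:ℕ):ℤ)) := by push_cast; ring
          rw [e]; exact h
        rcases Nat.even_or_odd (N + K) with he | ho
        · exfalso
          have h1 : Even ((N:ℤ) + (K:ℤ)) := by exact_mod_cast he
          have h2 : Even ((N:ℤ) - (K:ℤ)) := Int.even_sub.mpr (Int.even_add.mp h1)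
          exact (Int.not_odd_iff_even.mpr h2) h'
        · exact ho
      have hsign : ((-1:ℚ))^K * (-1:ℚ)^N = -1 := by
        rw [← pow_add, Nat.add_comm]
        exact Odd.neg_one_pow hodd
      set D : Polynomial ℚ := derivative^[K] (gpoly N) with hD
      have hsym : D.comp (-X - C ((N:ℚ)+1)) = -D := by
        have h1 := iterderiv_comp ((N:ℚ)+1) (gpoly N) K
        rw [gpoly_comp N,
          show ((-1:Polynomial ℚ)^N * gpoly N) = C ((-1:ℚ)^N) * gpoly N by
            rw [map_pow, map_neg, map_one],
          iterate_derivative_C_mul,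
          show ((-1:Polynomial ℚ)^K) = C ((-1:ℚ)^K) by rw [map_pow, map_neg, map_one]] at h1
        have h2 := congrArg (fun p => C ((-1:ℚ)^K) * p) h1
        simp only [← mul_assoc, ← map_mul] at h2
        rw [show ((-1:ℚ)^K * (-1:ℚ)^K) = 1 by rw [← mul_pow]; norm_num, map_one, one_mul,
          hsign] at h2
        rw [← h2, map_neg, map_one, neg_one_mul]
      have hLb : Lb (N+1) D = 0 := by
        have h3 := Lb_comp (N+1) D
        rw [show (((N+1:ℕ)):ℚ) = (N:ℚ)+1 by push_cast; ring, hsym,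
          show (-D) = (-1:ℚ) • D by rw [neg_one_smul], Lb_smul] at h3
        linarith
      have hdeg : D.natDegree < N + 2 := by
        have h4 : (gpoly N).natDegree ≤ N := by
          refine le_trans (Polynomial.natDegree_prod_le _ _) (le_of_eq ?_)
          have e1 : ∀ j ∈ Finset.range N, (X + C ((j:ℚ)+1)).natDegree = 1 :=
            fun j _ => Polynomial.natDegree_X_add_C _
          rw [Finset.sum_congr rfl e1, Finset.sum_const, Finset.card_range, smul_eq_mul, mul_one]
        have h5 := Polynomial.natDegree_iterate_derivative (gpoly N) K
        rw [← hD] at h5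
        omega
      have hmain : bsA (N+1) (K+1) = ((K.factorial : ℚ))⁻¹ * Lb (N+1) D := by
        rw [Lb_eq_range (N+1) (N+2) D hdeg, Finset.mul_sum]
        unfold bsA
        apply Finset.sum_congr rfl
        intro x hx
        have hc : D.coeff x = ((x+K).descFactorial K : ℚ) * (stirling1 (N+1) (x+K+1) : ℚ) := by
          rw [hD, Polynomial.coeff_iterate_derivative, coeff_gpoly, nsmul_eq_mul]
        have hic : intChoose (((K+1:ℕ):ℤ) + (x:ℤ) - 1) x = ((K+x).choose x : ℚ) := by
          rw [show ((((K+1:ℕ)):ℤ) + (x:ℤ) - 1) = ((K+x:ℕ):ℤ) by push_cast; ring,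
            intChoose_natCast]
        have hcd : ((x+K).descFactorial K : ℚ) = (K.factorial : ℚ) * ((K+x).choose x : ℚ) := by
          rw [Nat.descFactorial_eq_factorial_mul_choose]
          have hsymm : (K+x).choose K = (K+x).choose x := by
            have := Nat.choose_symm (Nat.le_add_left x K)
            rwa [Nat.add_sub_cancel] at this
          rw [Nat.add_comm x K, hsymm]
          push_cast; ring
        rw [hic, hc, hcd, ← Nat.add_assoc]
        have hK : (K.factorial : ℚ) ≠ 0 := Nat.cast_ne_zero.mpr K.factorial_ne_zero
        field_simp
      rw [hmain, hLb, mul_zero]
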